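/- Let d ≥ 2 and let M be a d×d complex matrix such that for every t ∈ {1,...,d−1} the Fourier vector v_t (with (v_t)_j = ω^{tj}, ω = e^{2πi/d}) satisfies both ⟨v_t, M u⟩ = 0 and ⟨u, M v_t⟩ = 0, where u = Σ_j e_j is the all-ones vector, and moreover ⟨v_s, M v_t⟩ = 0 for all distinct s, t ∈ {1,...,d−1}, ⟨e_0, M e_{d−1}⟩ = ⟨e_{d−1}, M e_0⟩ = 0, and ⟨e_q, M e_{d−1}⟩ = ⟨e_{d−1}, M e_q⟩ = 0 for 1 ≤ q ≤ d−2. Then M is a scalar multiple of the identity. -/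
import Mathlib

private lemma fin_cast_inj {d : ℕ} (j k : Fin d) (h : ((j : ℕ) : ZMod d) = ((k : ℕ) : ZMod d)) :
    j = k := by
  rw [ZMod.natCast_eq_natCast_iff'] at h
  rw [Nat.mod_eq_of_lt j.isLt, Nat.mod_eq_of_lt k.isLt] at h
  exact Fin.ext h

private lemma pow_sum_eval {d : ℕ} (hd : 2 ≤ d) {ω : ℂ} (hprim : IsPrimitiveRoot ω d)
    (a : ℕ) : ∑ s : Fin d, (ω ^ a) ^ (s : ℕ) = if d ∣ a then (d : ℂ) else 0 := by
  rw [Fin.sum_univ_eq_sum_range (fun i => (ω ^ a) ^ i)]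
  by_cases h : d ∣ a
  · rw [if_pos h, (hprim.pow_eq_one_iff_dvd a).mpr h]
    simp
  · rw [if_neg h, geom_sum_eq (fun h1 => h ((hprim.pow_eq_one_iff_dvd a).mp h1)) d]
    rw [← pow_mul, mul_comm a d, pow_mul, hprim.pow_eq_one]
    simp

private lemma pow_mod_eq {d : ℕ} {ω : ℂ} (hprim : IsPrimitiveRoot ω d)
    {m n : ℕ} (h : m % d = n % d) : ω ^ m = ω ^ n := by
  conv_lhs => rw [← Nat.div_add_mod m d]
  conv_rhs => rw [← Nat.div_add_mod n d]
  rw [pow_add, pow_add, pow_mul, pow_mul, hprim.pow_eq_one, h]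
  simp

theorem stopper_orthogonality_conditions_force_scalar (d : ℕ) (hd : 2 ≤ d)
    (ω : ℂ) (hω : ω = Complex.exp (2 * Real.pi * Complex.I / d))
    (v : Fin d → Fin d → ℂ) (hv : ∀ t j, v t j = ω ^ ((t : ℕ) * (j : ℕ)))
    (u : Fin d → ℂ) (hu : ∀ j, u j = 1)
    (e : Fin d → Fin d → ℂ) (he : ∀ k j, e k j = if j = k then 1 else 0)
    (M : Matrix (Fin d) (Fin d) ℂ)
    (hstop : ∀ t : Fin d, 1 ≤ (t : ℕ) →
      (∑ j : Fin d, (starRingEnd ℂ) (v t j) * M.mulVec u j = 0) ∧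
      (∑ j : Fin d, (starRingEnd ℂ) (u j) * M.mulVec (v t) j = 0))
    (hfour : ∀ s t : Fin d, 1 ≤ (s : ℕ) → 1 ≤ (t : ℕ) → s ≠ t →
      ∑ j : Fin d, (starRingEnd ℂ) (v s j) * M.mulVec (v t) j = 0)
    (h0 : ∑ j : Fin d, (starRingEnd ℂ) (e ⟨0, by omega⟩ j) * M.mulVec (e ⟨d - 1, by omega⟩) j = 0)
    (h0' : ∑ j : Fin d, (starRingEnd ℂ) (e ⟨d - 1, by omega⟩ j) * M.mulVec (e ⟨0, by omega⟩) j = 0)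
    (hq : ∀ q : Fin d, 1 ≤ (q : ℕ) → (q : ℕ) ≤ d - 2 →
      (∑ j : Fin d, (starRingEnd ℂ) (e q j) * M.mulVec (e ⟨d - 1, by omega⟩) j = 0) ∧
      (∑ j : Fin d, (starRingEnd ℂ) (e ⟨d - 1, by omega⟩ j) * M.mulVec (e q) j = 0)) :
    ∃ c : ℂ, M = c • (1 : Matrix (Fin d) (Fin d) ℂ) := by
  have hd0 : d ≠ 0 := by omega
  have hprim : IsPrimitiveRoot ω d := by
    rw [hω]; exact Complex.isPrimitiveRoot_exp d hd0
  have hω1 : ω ^ d = 1 := hprim.pow_eq_one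
  -- conjugation is the (d-1)-th power
  have hconj : ∀ n : ℕ, (starRingEnd ℂ) (ω ^ n) = ω ^ ((d - 1) * n) := by
    intro n
    have h1 : (starRingEnd ℂ) ω * ω = 1 := by
      rw [hω, ← Complex.exp_conj, ← Complex.exp_add,
        show (starRingEnd ℂ) (2 * ↑Real.pi * Complex.I / ↑d) + 2 * ↑Real.pi * Complex.I / ↑d = 0
          by simp [map_div₀, map_ofNat]; ring, Complex.exp_zero]
    have hω0 : ω ≠ 0 := by
      intro h; rw [h] at hω1; simp [hd0, zero_pow] at hω1
    have h3 : ω ^ (d - 1) * ω = 1 := by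
      rw [← pow_succ, Nat.sub_add_cancel (by omega)]; exact hω1
    have h2 : (starRingEnd ℂ) ω = ω ^ (d - 1) := mul_right_cancel₀ hω0 (h1.trans h3.symm)
    rw [map_pow, h2, ← pow_mul]
  -- key divisibility criterion
  have hdvd : ∀ j k : Fin d, d ∣ (j : ℕ) + (d - 1) * (k : ℕ) ↔ j = k := by
    intro j k
    rw [← ZMod.natCast_eq_zero_iff]
    push_cast [Nat.cast_sub (show 1 ≤ d by omega)]
    rw [ZMod.natCast_self]
    constructor
    · exact fun h => fin_cast_inj j k (by linear_combination h)
    · intro h; subst h; ring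
  -- Fourier matrices
  set A : Matrix (Fin d) (Fin d) ℂ :=
    Matrix.of (fun s j : Fin d => ω ^ ((d - 1) * ((s : ℕ) * (j : ℕ)))) with hA
  set B : Matrix (Fin d) (Fin d) ℂ :=
    Matrix.of (fun j t : Fin d => ω ^ ((t : ℕ) * (j : ℕ))) with hB
  have hBA : B * A = (d : ℂ) • 1 := by
    ext j k
    simp only [Matrix.mul_apply, hA, hB, Matrix.of_apply, Matrix.smul_apply, Matrix.one_apply,
      smul_eq_mul]
    have hterm : ∀ t : Fin d, ω ^ ((t : ℕ) * (j : ℕ)) * ω ^ ((d - 1) * ((t : ℕ) * (k : ℕ)))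
        = (ω ^ ((j : ℕ) + (d - 1) * (k : ℕ))) ^ (t : ℕ) := by
      intro t
      rw [← pow_add, ← pow_mul]
      congr 1
      ring
    rw [Finset.sum_congr rfl (fun t _ => hterm t), pow_sum_eval hd hprim]
    by_cases h : j = k
    · rw [if_pos ((hdvd j k).mpr h), if_pos h, mul_one]
    · rw [if_neg (fun hh => h ((hdvd j k).mp hh)), if_neg h, mul_zero]
  -- the Gram-type matrix
  have hCeq : ∀ s t : Fin d, (A * M * B) s t
      = ∑ j : Fin d, ∑ k : Fin d,
          ω ^ ((d - 1) * ((s : ℕ) * (j : ℕ))) * (M j k * ω ^ ((t : ℕ) * (k : ℕ))) := by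
    intro s t
    simp only [Matrix.mul_apply, hA, hB, Matrix.of_apply, Finset.sum_mul]
    rw [Finset.sum_comm]
    exact Finset.sum_congr rfl fun j _ => Finset.sum_congr rfl fun k _ => by ring
  have hsum_eq : ∀ s t : Fin d,
      ∑ j : Fin d, (starRingEnd ℂ) (v s j) * M.mulVec (v t) j = (A * M * B) s t := by
    intro s t
    rw [hCeq]
    refine Finset.sum_congr rfl fun j _ => ?_
    rw [hv, hconj, Matrix.mulVec, dotProduct, Finset.mul_sum]
    exact Finset.sum_congr rfl fun k _ => by rw [hv]
  have hC : ∀ s t : Fin d, s ≠ t → (A * M * B) s t = 0 := by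
    intro s t hst
    rw [← hsum_eq]
    rcases Nat.eq_zero_or_pos (s : ℕ) with hs | hs
    · rcases Nat.eq_zero_or_pos (t : ℕ) with ht | ht
      · exact absurd (Fin.ext (hs.trans ht.symm)) hst
      · have h2 := (hstop t ht).2
        rw [← h2]
        refine Finset.sum_congr rfl fun j _ => ?_
        rw [hu, hv, hs, zero_mul, pow_zero]
    · rcases Nat.eq_zero_or_pos (t : ℕ) with ht | ht
      · have hvt : v t = u := funext fun k => by rw [hv, hu, ht, zero_mul, pow_zero]
        rw [hvt]
        exact (hstop s hs).1
      · exact hfour s t hs ht hst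
  have hM : B * (A * M * B) * A = ((d : ℂ) * (d : ℂ)) • M := by
    have hassoc : B * (A * M * B) * A = (B * A) * M * (B * A) := by
      noncomm_ring
    rw [hassoc, hBA, Matrix.smul_mul, Matrix.one_mul, Matrix.mul_smul, Matrix.mul_one, smul_smul]
  have hentry : ∀ j k : Fin d, ((d : ℂ) * (d : ℂ)) * M j k
      = ∑ t : Fin d,
          ω ^ ((t : ℕ) * (j : ℕ) + (d - 1) * ((t : ℕ) * (k : ℕ))) * (A * M * B) t t := by
    intro j k
    have h1 : (((d : ℂ) * (d : ℂ)) • M) j k = ((d : ℂ) * (d : ℂ)) * M j k := rfl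
    rw [← h1, ← hM, Matrix.mul_apply]
    refine Finset.sum_congr rfl fun t _ => ?_
    rw [Matrix.mul_apply, Finset.sum_eq_single t
      (fun s _ hs => by rw [hC s t hs, mul_zero]) (fun h => absurd (Finset.mem_univ t) h)]
    simp only [hA, hB, Matrix.of_apply]
    rw [pow_add]
    ring
  have hd2 : ((d : ℂ) * (d : ℂ)) ≠ 0 := by
    have hdc : (d : ℂ) ≠ 0 := Nat.cast_ne_zero.mpr hd0
    exact mul_ne_zero hdc hdc
  have hcirc : ∀ j k j' k' : Fin d, ((j : ℕ) + (k' : ℕ)) % d = ((j' : ℕ) + (k : ℕ)) % d →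
      M j k = M j' k' := by
    intro j k j' k' h
    have h2 : ((d : ℂ) * (d : ℂ)) * M j k = ((d : ℂ) * (d : ℂ)) * M j' k' := by
      rw [hentry, hentry]
      refine Finset.sum_congr rfl fun t _ => ?_
      congr 1
      apply pow_mod_eq hprim
      apply (ZMod.natCast_eq_natCast_iff' _ _ d).mp
      have hh : (((j : ℕ) + (k' : ℕ) : ℕ) : ZMod d) = (((j' : ℕ) + (k : ℕ) : ℕ) : ZMod d) :=
        (ZMod.natCast_eq_natCast_iff' _ _ d).mpr h
      push_cast [Nat.cast_sub (show 1 ≤ d by omega)] at hh ⊢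
      rw [ZMod.natCast_self]
      linear_combination ((t : ℕ) : ZMod d) * hh
    exact mul_left_cancel₀ hd2 h2
  -- the standard-basis orthogonality conditions give entries
  have hentry_sum : ∀ a b : Fin d,
      ∑ j : Fin d, (starRingEnd ℂ) (e a j) * M.mulVec (e b) j = M a b := by
    intro a b
    have h1 : ∀ j, M.mulVec (e b) j = M j b := by
      intro j
      rw [Matrix.mulVec, dotProduct]
      simp [he]
    simp [h1, he, apply_ite]
  have hE : ∀ q : Fin d, (q : ℕ) ≠ d - 1 →
      M q ⟨d - 1, by omega⟩ = 0 ∧ M ⟨d - 1, by omega⟩ q = 0 := by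
    intro q hq1
    rcases Nat.eq_zero_or_pos (q : ℕ) with hq0 | hq0
    · have hqe : q = ⟨0, by omega⟩ := Fin.ext hq0
      rw [hqe]
      exact ⟨by rw [← hentry_sum]; exact h0, by rw [← hentry_sum]; exact h0'⟩
    · have hqle : (q : ℕ) ≤ d - 2 := by have := q.isLt; omega
      obtain ⟨hA1, hA2⟩ := hq q hq0 hqle
      exact ⟨by rw [← hentry_sum]; exact hA1, by rw [← hentry_sum]; exact hA2⟩
  refine ⟨M ⟨0, by omega⟩ ⟨0, by omega⟩, ?_⟩
  ext i j
  rw [Matrix.smul_apply, Matrix.one_apply]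
  by_cases hij : i = j
  · subst hij
    rw [if_pos rfl, smul_eq_mul, mul_one]
    exact hcirc i i ⟨0, by omega⟩ ⟨0, by omega⟩ (by simp)
  · rw [if_neg hij, smul_eq_mul, mul_zero]
    set m : Fin d := ⟨((d - 1) + (j : ℕ) + (d - (i : ℕ))) % d, Nat.mod_lt _ (by omega)⟩ with hm
    have hcond : ((i : ℕ) + (m : ℕ)) % d = ((d - 1) + (j : ℕ)) % d := by
      simp only [hm]
      rw [Nat.add_mod_mod]
      have he2 : (i : ℕ) + ((d - 1) + (j : ℕ) + (d - (i : ℕ))) = ((d - 1) + (j : ℕ)) + d := by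
        have := i.isLt; omega
      rw [he2, Nat.add_mod_right]
    have hmne : (m : ℕ) ≠ d - 1 := by
      intro hmeq
      apply hij
      apply fin_cast_inj
      have h1 : (((i : ℕ) + (m : ℕ) : ℕ) : ZMod d) = (((d - 1) + (j : ℕ) : ℕ) : ZMod d) :=
        (ZMod.natCast_eq_natCast_iff' _ _ d).mpr hcond
      rw [hmeq] at h1
      push_cast [Nat.cast_sub (show 1 ≤ d by omega)] at h1
      linear_combination h1
    rw [hcirc i j ⟨d - 1, by omega⟩ m hcond]
    exact (hE m hmne).2
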